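/- For n ≥ 2, after removing any set of at most n−2 vertices from Q_n, the remaining graph is connected and has diameter exactly n. -/

import Mathlib

open SimpleGraph

/-- The `n`-dimensional hypercube: vertices are `Fin n → Bool`,
adjacent iff Hamming distance is `1`. -/
def Q (n : ℕ) : SimpleGraph (Fin n → Bool) where
  Adj u v := hammingDist u v = 1
  symm := ⟨fun u v (h : hammingDist u v = 1) => show hammingDist v u = 1 from (hammingDist_comm v u).trans h⟩
  loopless := ⟨fun u h => by simp [hammingDist_self] at h⟩

/-- Flip the `i`-th bit of `x`. -/
def flipBit {n : ℕ} (x : Fin n → Bool) (i : Fin n) : Fin n → Bool :=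
  Function.update x i (!x i)

/-- `S` is a subcube of dimension exactly `m` (fixing `n - m` coordinates). -/
def IsSubcube {n : ℕ} (m : ℕ) (S : Set (Fin n → Bool)) : Prop :=
  ∃ A : Finset (Fin n), A.card = n - m ∧ ∃ p : Fin n → Bool,
    S = {x | ∀ i ∈ A, x i = p i}

/-- `S` is a subcube of dimension at most `m` (fixing at least `n - m` coordinates). -/
def IsSubcubeLe {n : ℕ} (m : ℕ) (S : Set (Fin n → Bool)) : Prop :=
  ∃ A : Finset (Fin n), n - m ≤ A.card ∧ ∃ p : Fin n → Bool,
    S = {x | ∀ i ∈ A, x i = p i}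

namespace RKD
variable {n : ℕ}

def flipSet (x : Fin n → Bool) (A : Finset (Fin n)) : Fin n → Bool :=
  fun i => if i ∈ A then !(x i) else x i

lemma flipSet_empty (x : Fin n → Bool) : flipSet x ∅ = x := by
  funext i; simp [flipSet]

lemma flipSet_inj {x : Fin n → Bool} {A B : Finset (Fin n)}
    (h : flipSet x A = flipSet x B) : A = B := by
  ext i
  have := congrFun h i
  simp only [flipSet] at this
  by_cases hA : i ∈ A <;> by_cases hB : i ∈ B <;>
    simp [hA, hB] at this ⊢ <;> cases x i <;> simp_all

lemma adj_flipBit (x : Fin n → Bool) (i : Fin n) : (Q n).Adj x (flipBit x i) := by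
  show hammingDist x (flipBit x i) = 1
  unfold hammingDist
  rw [show (Finset.univ.filter fun j => x j ≠ flipBit x i j) = {i} from ?_]
  · simp
  · ext j
    rw [Finset.mem_filter]
    simp only [Finset.mem_filter, Finset.mem_univ, true_and, Finset.mem_singleton, flipBit]
    constructor
    · intro hj
      by_contra hne
      rw [Function.update_of_ne hne] at hj
      exact hj rfl
    · intro hj; subst hj; simp

lemma flipSet_insert {x : Fin n → Bool} {a : Fin n} {T : Finset (Fin n)} (h : a ∉ T) :
    flipSet x (insert a T) = flipSet (flipBit x a) T := by
  funext i
  by_cases hia : i = a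
  · subst hia
    simp [flipSet, h, flipBit]
  · simp [flipSet, hia, flipBit, Function.update_of_ne hia]

lemma flipBit_flipSet_insert {x : Fin n → Bool} {a : Fin n} {T : Finset (Fin n)} (h : a ∉ T) :
    flipBit (flipSet x (insert a T)) a = flipSet x T := by
  funext i
  by_cases hia : i = a
  · subst hia
    simp [flipSet, h, flipBit]
  · simp [flipSet, hia, flipBit, Function.update_of_ne hia]

def walkOf (x : Fin n → Bool) : (L : List (Fin n)) → (Q n).Walk x (L.foldl flipBit x)
  | [] => Walk.nil
  | i :: L => Walk.cons (adj_flipBit x i) (walkOf (flipBit x i) L)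

lemma length_walkOf (x : Fin n → Bool) (L : List (Fin n)) :
    (walkOf x L).length = L.length := by
  induction L generalizing x with
  | nil => rfl
  | cons a L ih => simp [walkOf, ih]

lemma support_walkOf (x : Fin n → Bool) (L : List (Fin n)) :
    ∀ z ∈ (walkOf x L).support, ∃ k, k ≤ L.length ∧ z = (L.take k).foldl flipBit x := by
  induction L generalizing x with
  | nil => intro z hz; simp [walkOf] at hz; exact ⟨0, by simp, by simp [hz]⟩
  | cons a L ih =>
    intro z hz
    simp only [walkOf, Walk.support_cons, List.mem_cons] at hz
    rcases List.mem_cons.mp hz with rfl | hz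
    · exact ⟨0, by simp, by simp⟩
    · obtain ⟨k, hk, hzk⟩ := ih (flipBit x a) z hz
      exact ⟨k + 1, by simpa using hk, by simpa using hzk⟩

lemma foldl_flip_nodup (x : Fin n → Bool) (L : List (Fin n)) (h : L.Nodup) :
    L.foldl flipBit x = flipSet x L.toFinset := by
  induction L generalizing x with
  | nil => simp [flipSet_empty]
  | cons a L ih =>
    have ha : a ∉ L.toFinset := by simp [List.nodup_cons.mp h |>.1]
    rw [List.foldl_cons, ih _ (List.nodup_cons.mp h).2, List.toFinset_cons,
      flipSet_insert ha]

def P (d j k : ℕ) : Finset ℕ := (Finset.range k).image (fun t => (t + j) % d)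

lemma mem_P {d j k m : ℕ} : m ∈ P d j k ↔ ∃ t < k, (t + j) % d = m := by
  simp [P]

lemma self_mem_P {d j k : ℕ} (hj : j < d) (hk : 1 ≤ k) : j ∈ P d j k :=
  mem_P.mpr ⟨0, hk, by simp [Nat.mod_eq_of_lt hj]⟩

lemma pred_not_mem_P {d j k : ℕ} (hd : 0 < d) (hk : k ≤ d - 1) :
    (j + (d - 1)) % d ∉ P d j k := by
  rw [mem_P]
  rintro ⟨t, ht, hEq⟩
  have h1 : (t + j) % d = (d - 1 + j) % d := by rw [hEq]; ring_nf
  have h2 : t % d = (d - 1) % d := Nat.ModEq.add_right_cancel' j h1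
  have ht' : t < d := lt_of_lt_of_le ht (by omega)
  rw [Nat.mod_eq_of_lt ht', Nat.mod_eq_of_lt (by omega)] at h2
  omega

lemma P_eq_start {d j j' k k' : ℕ} (hd : 0 < d) (hj : j < d) (hj' : j' < d)
    (hk1 : 1 ≤ k) (hk2 : k ≤ d - 1) (hk1' : 1 ≤ k') (hk2' : k' ≤ d - 1)
    (h : P d j k = P d j' k') : j = j' := by
  have hj'mem : j' ∈ P d j k := h ▸ self_mem_P hj' hk1'
  obtain ⟨s, hs, hse⟩ := mem_P.mp hj'mem
  rcases Nat.eq_zero_or_pos s with rfl | hspos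
  · rw [Nat.zero_add, Nat.mod_eq_of_lt hj] at hse; exact hse
  · exfalso
    have hmem : (j' + (d - 1)) % d ∈ P d j k := by
      rw [mem_P]
      refine ⟨s - 1, by omega, ?_⟩
      rw [← hse, Nat.mod_add_mod,
        show s + j + (d - 1) = (s - 1 + j) + d by omega, Nat.add_mod_right]
    exact pred_not_mem_P hd hk2' (h ▸ hmem)

lemma key (hn : 2 ≤ n) (S : Set (Fin n → Bool)) (hS : S.ncard ≤ n - 2)
    (x y : Fin n → Bool) (hx : x ∉ S) (hy : y ∉ S) :
    ∃ w : (Q n).Walk x y, w.length ≤ n ∧ ∀ z ∈ w.support, z ∉ S := by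
  classical
  set D : Finset (Fin n) := Finset.univ.filter (fun i => x i ≠ y i) with hDdef
  set d := D.card with hd
  have hyD : flipSet x D = y := by
    funext i
    by_cases hi : i ∈ D
    · have : x i ≠ y i := by simpa [hDdef] using hi
      simp only [flipSet, if_pos hi]
      cases hxi : x i <;> cases hyi : y i <;> simp_all
    · have : x i = y i := by simpa [hDdef] using hi
      simp only [flipSet, if_neg hi]; exact this
  have hdn : d ≤ n := by
    calc d ≤ Fintype.card (Fin n) := Finset.card_le_univ D
    _ = n := by simp
  rcases Nat.eq_zero_or_pos d with hd0 | hd0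
  · -- x = y
    have hDe : D = ∅ := Finset.card_eq_zero.mp (by omega)
    have hxy : x = y := by rw [← hyD, hDe, flipSet_empty]
    subst hxy
    exact ⟨Walk.nil, by simp, by
      intro z hz
      simp only [Walk.support_nil, List.mem_singleton] at hz
      subst hz; exact hx⟩
  -- main case : d ≥ 1
  set ℓ : List (Fin n) := D.toList with hldef
  have hlnd : ℓ.Nodup := Finset.nodup_toList D
  have hllen : ℓ.length = d := Finset.length_toList D
  have hlfin : ℓ.toFinset = D := by ext a; simp [hldef]
  -- rotations
  have hrotnd : ∀ j : ℕ, (ℓ.rotate j).Nodup := fun j => List.nodup_rotate.mpr hlnd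
  have hrotfin : ∀ j : ℕ, (ℓ.rotate j).toFinset = D := by
    intro j
    ext a
    rw [List.mem_toFinset, List.mem_rotate, ← List.mem_toFinset, hlfin]
  have hrotlen : ∀ j : ℕ, (ℓ.rotate j).length = d := fun j => by
    rw [List.length_rotate, hllen]
  have hrotend : ∀ j : ℕ, (ℓ.rotate j).foldl flipBit x = y := by
    intro j
    rw [foldl_flip_nodup x _ (hrotnd j), hrotfin j, hyD]
  -- the rotation walks
  set wR : ℕ → (Q n).Walk x y := fun j => (walkOf x (ℓ.rotate j)).copy rfl (hrotend j)
    with hwRdef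
  have hwRlen : ∀ j : ℕ, (wR j).length = d := by
    intro j
    rw [hwRdef]
    simp [Walk.length_copy, length_walkOf, hrotlen j]
  -- prefix sets of rotations
  set Tset : ℕ → ℕ → Finset (Fin n) := fun j k => ((ℓ.rotate j).take k).toFinset with hTdef
  have hTsub : ∀ j k, Tset j k ⊆ D := by
    intro j k a ha
    rw [← hrotfin j]
    simp only [hTdef, List.mem_toFinset] at ha ⊢
    exact List.mem_of_mem_take ha
  have hTcard : ∀ j k, k ≤ d → (Tset j k).card = k := by
    intro j k hk
    rw [hTdef]
    rw [List.toFinset_card_of_nodup ((hrotnd j).sublist (List.take_sublist _ _))]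
    rw [List.length_take, hrotlen j]
    omega
  -- support characterization of rotation walks
  have hrotsupp : ∀ j, ∀ z ∈ (wR j).support, ∃ k ≤ d, z = flipSet x (Tset j k) := by
    intro j z hz
    rw [hwRdef] at hz
    simp only [Walk.support_copy] at hz
    obtain ⟨k, hk, hzk⟩ := support_walkOf x (ℓ.rotate j) z hz
    refine ⟨k, by rw [hrotlen j] at hk; exact hk, ?_⟩
    rw [hzk, foldl_flip_nodup x _ ((hrotnd j).sublist (List.take_sublist _ _))]
  -- the function G and Tset as image of P
  have hd0' : 0 < ℓ.length := by omega
  set G : ℕ → Fin n := fun m => ℓ.get ⟨m % d, by rw [hllen]; exact Nat.mod_lt _ hd0⟩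
    with hGdef
  have hGinj : ∀ m < d, ∀ m' < d, G m = G m' → m = m' := by
    intro m hm m' hm' hmm
    have := List.nodup_iff_injective_get.mp hlnd hmm
    have := Fin.mk.injEq _ _ _ _ ▸ this
    simpa [Nat.mod_eq_of_lt hm, Nat.mod_eq_of_lt hm'] using this
  have hTP : ∀ j k, k ≤ d → Tset j k = (P d j k).image G := by
    intro j k hk
    ext a
    simp only [hTdef, List.mem_toFinset, Finset.mem_image]
    rw [List.mem_iff_get]
    constructor
    · rintro ⟨⟨t, hlt⟩, rfl⟩
      have hlt' : t < k := by
        have := hlt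
        rw [List.length_take, hrotlen j] at this
        omega
      refine ⟨(t + j) % d, mem_P.mpr ⟨t, hlt', rfl⟩, ?_⟩
      have h1 : (List.take k (ℓ.rotate j)).get ⟨t, hlt⟩ = (ℓ.rotate j).get ⟨t, by
        rw [hrotlen j]; omega⟩ := by
        simp [List.get_eq_getElem, List.getElem_take]
      rw [h1, List.get_rotate]
      simp only [hGdef, hllen]
      congr 1
      simp [Nat.mod_mod]
    · rintro ⟨m, hm, rfl⟩
      obtain ⟨t, htk, rfl⟩ := mem_P.mp hm
      have htd : t < d := by omega
      refine ⟨⟨t, by rw [List.length_take, hrotlen j]; omega⟩, ?_⟩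
      have h1 : (List.take k (ℓ.rotate j)).get ⟨t, by
          rw [List.length_take, hrotlen j]; omega⟩ = (ℓ.rotate j).get ⟨t, by
        rw [hrotlen j]; omega⟩ := by
        simp [List.get_eq_getElem, List.getElem_take]
      rw [h1, List.get_rotate]
      simp only [hGdef, hllen]
      congr 1
      simp [Nat.mod_mod]
  have hPsub : ∀ j k, P d j k ⊆ Finset.range d := by
    intro j k m hm
    obtain ⟨t, _, rfl⟩ := mem_P.mp hm
    exact Finset.mem_range.mpr (Nat.mod_lt _ hd0)
  have hTinj : ∀ j k j' k', k ≤ d → k' ≤ d → Tset j k = Tset j' k' →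
      P d j k = P d j' k' := by
    intro j k j' k' hk hk' hT
    rw [hTP j k hk, hTP j' k' hk'] at hT
    ext m
    constructor
    · intro hm
      have h1 : G m ∈ (P d j' k').image G := by
        rw [← hT]; exact Finset.mem_image_of_mem G hm
      obtain ⟨m', hm', hGm⟩ := Finset.mem_image.mp h1
      have : m' = m := hGinj m' (Finset.mem_range.mp (hPsub _ _ hm')) m
        (Finset.mem_range.mp (hPsub _ _ hm)) hGm
      exact this ▸ hm'
    · intro hm
      have h1 : G m ∈ (P d j k).image G := by
        rw [hT]; exact Finset.mem_image_of_mem G hm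
      obtain ⟨m', hm', hGm⟩ := Finset.mem_image.mp h1
      have : m' = m := hGinj m' (Finset.mem_range.mp (hPsub _ _ hm')) m
        (Finset.mem_range.mp (hPsub _ _ hm)) hGm
      exact this ▸ hm'
  -- blocking vertex for rotations characterization
  have hrotblock : ∀ j, (∃ z ∈ (wR j).support, z ∈ S) →
      ∃ z ∈ S, ∃ k, 1 ≤ k ∧ k ≤ d - 1 ∧ z = flipSet x (Tset j k) := by
    rintro j ⟨z, hzs, hzS⟩
    obtain ⟨k, hkd, rfl⟩ := hrotsupp j z hzs
    refine ⟨_, hzS, k, ?_, ?_, rfl⟩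
    · by_contra h
      have hk0 : k = 0 := by omega
      subst hk0
      have he : Tset j 0 = ∅ := Finset.card_eq_zero.mp (hTcard j 0 (by omega))
      rw [he, flipSet_empty] at hzS
      exact hx hzS
    · by_contra h
      have hkd' : k = d := by omega
      subst hkd'
      have hTD : Tset j d = D := Finset.eq_of_subset_of_card_le (hTsub j d)
        (by rw [hTcard j d le_rfl])
      rw [hTD, hyD] at hzS
      exact hy hzS
  by_cases hgoodR : ∃ j < d, ∀ z ∈ (wR j).support, z ∉ S
  · obtain ⟨j, _, hj⟩ := hgoodR
    exact ⟨wR j, by rw [hwRlen j]; exact hdn, hj⟩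
  push_neg at hgoodR
  have H : ∀ j : ℕ, ∃ z : Fin n → Bool, ∃ k : ℕ, j < d →
      z ∈ S ∧ 1 ≤ k ∧ k ≤ d - 1 ∧ z = flipSet x (Tset j k) := by
    intro j
    by_cases hj : j < d
    · obtain ⟨z, hzs, hzS⟩ := hgoodR j hj
      obtain ⟨z', hz'S, k, h1, h2, h3⟩ := hrotblock j ⟨z, hzs, hzS⟩
      exact ⟨z', k, fun _ => ⟨hz'S, h1, h2, h3⟩⟩
    · exact ⟨x, 0, fun h => absurd h hj⟩
  choose zR kR hR using H
  have hzRinj : Set.InjOn zR ↑(Finset.range d) := by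
    intro j hj j' hj' hzz
    simp only [Finset.coe_range, Set.mem_Iio] at hj hj'
    obtain ⟨_, hk1, hk2, he⟩ := hR j hj
    obtain ⟨_, hk1', hk2', he'⟩ := hR j' hj'
    rw [he, he'] at hzz
    exact P_eq_start hd0 hj hj' hk1 hk2 hk1' hk2'
      (hTinj _ _ _ _ (by omega) (by omega) (flipSet_inj hzz))
  have hzRS : ∀ j ∈ Finset.range d, zR j ∈ S := fun j hj =>
    (hR j (Finset.mem_range.mp hj)).1
  have hzRout : ∀ j ∈ Finset.range d, ∀ i, i ∉ D → zR j i = x i := by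
    intro j hj i hi
    obtain ⟨_, _, _, he⟩ := hR j (Finset.mem_range.mp hj)
    rw [he]
    simp only [flipSet]
    rw [if_neg (fun hmem => hi (hTsub _ _ hmem))]
  rcases le_or_gt (n - 1) d with hcase | hcase
  · exfalso
    have hcard : ((Finset.range d).image zR).card = d := by
      rw [Finset.card_image_of_injOn hzRinj, Finset.card_range]
    have hsub : ↑((Finset.range d).image zR) ⊆ S := by
      intro z hz
      simp only [Finset.coe_image, Set.mem_image, Finset.mem_coe] at hz
      obtain ⟨j, hj, rfl⟩ := hz
      exact hzRS j hj
    have hle := Set.ncard_le_ncard hsub (Set.toFinite S)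
    rw [Set.ncard_coe_finset, hcard] at hle
    omega
  -- d ≤ n - 2 : consider detours
  have hdetend : ∀ i, i ∉ D → (i :: (ℓ ++ [i])).foldl flipBit x = y := by
    intro i hi
    have hnd : (i :: ℓ).Nodup := List.nodup_cons.mpr
      ⟨fun hmem => hi (by rw [← hlfin]; exact List.mem_toFinset.mpr hmem), hlnd⟩
    rw [show (i :: (ℓ ++ [i])) = (i :: ℓ) ++ [i] by simp, List.foldl_append,
      foldl_flip_nodup x _ hnd, List.toFinset_cons, hlfin]
    simp only [List.foldl_cons, List.foldl_nil]
    rw [flipBit_flipSet_insert hi, hyD]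
  by_cases hgoodD : ∃ i, i ∉ D ∧ ∀ z ∈ (walkOf x (i :: (ℓ ++ [i]))).support, z ∉ S
  · obtain ⟨i, hiD, hgood⟩ := hgoodD
    refine ⟨(walkOf x _).copy rfl (hdetend i hiD), ?_, ?_⟩
    · rw [Walk.length_copy, length_walkOf]
      simp only [List.length_cons, List.length_append, List.length_singleton, List.length_nil, hllen]
      omega
    · intro z hz
      rw [Walk.support_copy] at hz
      exact hgood z hz
  push_neg at hgoodD
  have hdetsupp : ∀ i, i ∉ D → ∀ z ∈ (walkOf x (i :: (ℓ ++ [i]))).support,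
      z = x ∨ z = y ∨ ∃ T ⊆ D, z = flipSet x (insert i T) := by
    intro i hi z hz
    obtain ⟨k, hk, rfl⟩ := support_walkOf x _ z hz
    simp only [List.length_cons, List.length_append, List.length_singleton, List.length_nil, hllen] at hk
    rcases Nat.eq_zero_or_pos k with rfl | hk0
    · left; simp
    rcases Nat.lt_or_ge k (d + 2) with hklt | hkge
    · right; right
      have htake : (i :: (ℓ ++ [i])).take k = i :: ℓ.take (k - 1) := by
        rw [show k = (k - 1) + 1 by omega, List.take_succ_cons]
        congr 1
        exact List.take_append_of_le_length (by omega)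
      have hndtake : (i :: ℓ.take (k - 1)).Nodup := List.nodup_cons.mpr
        ⟨fun hmem => hi (by
          rw [← hlfin]
          exact List.mem_toFinset.mpr (List.mem_of_mem_take hmem)),
         hlnd.sublist (List.take_sublist _ _)⟩
      refine ⟨(ℓ.take (k - 1)).toFinset, ?_, ?_⟩
      · intro a ha
        rw [← hlfin]
        exact List.mem_toFinset.mpr (List.mem_of_mem_take (List.mem_toFinset.mp ha))
      · rw [htake, foldl_flip_nodup x _ hndtake, List.toFinset_cons]
    · right; left
      have hk2 : k = d + 2 := by omega
      subst hk2
      rw [List.take_of_length_le (by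
        simp only [List.length_cons, List.length_append, List.length_singleton,
          List.length_nil, hllen]
        omega)]
      exact hdetend i hi
  have H2 : ∀ i : Fin n, ∃ z : Fin n → Bool, i ∉ D →
      z ∈ S ∧ ∃ T ⊆ D, z = flipSet x (insert i T) := by
    intro i
    by_cases hi : i ∈ D
    · exact ⟨x, fun h => absurd hi h⟩
    · obtain ⟨z, hzs, hzS⟩ := hgoodD i hi
      rcases hdetsupp i hi z hzs with hzx | hzy | hT
      · exact absurd (hzx ▸ hzS) hx
      · exact absurd (hzy ▸ hzS) hy
      · exact ⟨z, fun _ => ⟨hzS, hT⟩⟩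
  choose zD hzD using H2
  exfalso
  have hzDflip : ∀ i, i ∉ D → zD i i = !(x i) := by
    intro i hi
    obtain ⟨_, T, hTsub', he⟩ := hzD i hi
    rw [he]
    simp [flipSet]
  have hzDout : ∀ i, i ∉ D → ∀ i', i' ∉ D → i' ≠ i → zD i i' = x i' := by
    intro i hi i' hi' hne
    obtain ⟨_, T, hTsub', he⟩ := hzD i hi
    rw [he]
    simp only [flipSet]
    rw [if_neg]
    intro hmem
    rcases Finset.mem_insert.mp hmem with h | h
    · exact hne h
    · exact hi' (hTsub' h)
  have hzDinj : Set.InjOn zD ↑(Finset.univ \ D) := by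
    intro i hi i' hi' hzz
    simp only [Finset.coe_sdiff, Finset.coe_univ, Set.mem_diff, Set.mem_univ, true_and,
      Finset.mem_coe] at hi hi'
    by_contra hne
    have h1 : zD i i = !(x i) := hzDflip i hi
    have h2 : zD i' i = x i := hzDout i' hi' i hi (fun h => hne h)
    rw [hzz, h2] at h1
    exact Bool.not_ne_self (x i) h1.symm
  set F1 := (Finset.range d).image zR with hF1
  set F2 := (Finset.univ \ D).image zD with hF2
  have hdisj : Disjoint F1 F2 := by
    rw [Finset.disjoint_left]
    intro a ha1 ha2
    obtain ⟨j, hj, rfl⟩ := Finset.mem_image.mp ha1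
    obtain ⟨i, hi, he⟩ := Finset.mem_image.mp ha2
    have hiD : i ∉ D := (Finset.mem_sdiff.mp hi).2
    have h1 : zR j i = x i := hzRout j hj i hiD
    have h2 : zD i i = !(x i) := hzDflip i hiD
    rw [he, h1] at h2
    exact Bool.not_ne_self (x i) h2.symm
  have hcard : (F1 ∪ F2).card = d + (n - d) := by
    rw [Finset.card_union_of_disjoint hdisj, hF1, hF2,
      Finset.card_image_of_injOn hzRinj, Finset.card_image_of_injOn hzDinj,
      Finset.card_range, Finset.card_sdiff_of_subset (Finset.subset_univ D)]
    congr 1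
    simp [hd]
  have hsub : ↑(F1 ∪ F2) ⊆ S := by
    intro z hz
    rcases Finset.mem_union.mp hz with h | h
    · obtain ⟨j, hj, rfl⟩ := Finset.mem_image.mp h
      exact hzRS j hj
    · obtain ⟨i, hi, rfl⟩ := Finset.mem_image.mp h
      exact (hzD i (Finset.mem_sdiff.mp hi).2).1
  have hle := Set.ncard_le_ncard hsub (Set.toFinite S)
  rw [Set.ncard_coe_finset, hcard] at hle
  omega


lemma exists_induce_walk {V : Type*} {G : SimpleGraph V} {s : Set V} :
    ∀ {a b : V} (w : G.Walk a b), (∀ z ∈ w.support, z ∈ s) → ∀ (ha : a ∈ s) (hb : b ∈ s),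
    ∃ w' : (G.induce s).Walk ⟨a, ha⟩ ⟨b, hb⟩, w'.length = w.length := by
  intro a b w
  induction w with
  | nil => intro h ha hb; exact ⟨Walk.nil, rfl⟩
  | @cons a c b hadj p ih =>
    intro h ha hb
    have hc : c ∈ s := h c (by simp)
    obtain ⟨w', hw'⟩ := ih (fun z hz => h z (by simp [hz])) hc hb
    exact ⟨Walk.cons (by simpa using hadj) w', by simp [hw']⟩

lemma hamming_le_length {n : ℕ} : ∀ {a b : Fin n → Bool} (w : (Q n).Walk a b),
    hammingDist a b ≤ w.length := by
  intro a b w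
  induction w with
  | nil => simp [hammingDist_self]
  | @cons a c b hadj p ih =>
    calc hammingDist a b ≤ hammingDist a c + hammingDist c b := hammingDist_triangle a c b
    _ ≤ 1 + p.length := by
        have : hammingDist a c = 1 := hadj
        omega
    _ = (Walk.cons hadj p).length := by simp [Walk.length_cons]; omega

lemma two_mul_lt_two_pow {n : ℕ} (hn : 2 ≤ n) : 2 * (n - 2) < 2 ^ n := by
  have h1 : n - 1 < 2 ^ (n - 1) := Nat.lt_two_pow_self
  have h2 : 2 ^ n = 2 * 2 ^ (n - 1) := by
    conv_lhs => rw [show n = (n - 1) + 1 by omega]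
    rw [pow_succ]
    ring
  omega

end RKD

theorem removal_keeps_diameter (n : ℕ) (hn : 2 ≤ n) (S : Set (Fin n → Bool))
    (hS : S.ncard ≤ n - 2) :
    ((Q n).induce Sᶜ).Connected ∧
    (∀ x y, ((Q n).induce Sᶜ).dist x y ≤ n) ∧
    ∃ x y, ((Q n).induce Sᶜ).dist x y = n := by
  classical
  set c : (Fin n → Bool) → (Fin n → Bool) := fun v i => !(v i) with hc
  have hcc : ∀ v, c (c v) = v := fun v => by funext i; simp [hc]
  obtain ⟨v, hv1, hv2⟩ : ∃ v, v ∉ S ∧ c v ∉ S := by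
    by_contra h
    push_neg at h
    have hsub : Set.univ ⊆ S ∪ c '' S := by
      intro v _
      rcases Classical.em (v ∈ S) with h1 | h1
      · exact Or.inl h1
      · exact Or.inr ⟨c v, h v h1, hcc v⟩
    have h1 : (Set.univ : Set (Fin n → Bool)).ncard ≤ (S ∪ c '' S).ncard :=
      Set.ncard_le_ncard hsub (Set.toFinite _)
    have h2 : (S ∪ c '' S).ncard ≤ S.ncard + (c '' S).ncard := Set.ncard_union_le _ _
    have h3 : (c '' S).ncard ≤ S.ncard := Set.ncard_image_le (Set.toFinite _)
    have h4 : (Set.univ : Set (Fin n → Bool)).ncard = 2 ^ n := by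
      rw [Set.ncard_univ, Nat.card_eq_fintype_card]
      simp
    have h5 := RKD.two_mul_lt_two_pow hn
    omega
  haveI hne : Nonempty ↥(Sᶜ) := ⟨⟨v, hv1⟩⟩
  have hkey : ∀ x y : ↥(Sᶜ), ∃ w : ((Q n).induce Sᶜ).Walk x y, w.length ≤ n := by
    intro x y
    obtain ⟨w, hwlen, hwsupp⟩ := RKD.key hn S hS ↑x ↑y x.2 y.2
    obtain ⟨w', hw'⟩ := RKD.exists_induce_walk w (fun z hz => hwsupp z hz) x.2 y.2
    exact ⟨w', by omega⟩
  have hprecon : ((Q n).induce Sᶜ).Preconnected := fun x y => ⟨(hkey x y).choose⟩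
  have hdistle : ∀ x y : ↥(Sᶜ), ((Q n).induce Sᶜ).dist x y ≤ n := by
    intro x y
    obtain ⟨w, hw⟩ := hkey x y
    exact le_trans (SimpleGraph.dist_le w) hw
  refine ⟨⟨hprecon⟩, hdistle, ?_⟩
  refine ⟨⟨v, hv1⟩, ⟨c v, hv2⟩, ?_⟩
  obtain ⟨p, hp⟩ := (hprecon ⟨v, hv1⟩ ⟨c v, hv2⟩).exists_walk_length_eq_dist
  have hmap := RKD.hamming_le_length (p.map (SimpleGraph.Embedding.induce Sᶜ).toHom)
  rw [SimpleGraph.Walk.length_map] at hmap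
  have hham : hammingDist v (c v) = n := by
    unfold hammingDist
    rw [show (Finset.univ.filter fun i => v i ≠ c v i) = Finset.univ from ?_]
    · simp
    · ext i; simp [hc]
  have hle := hdistle ⟨v, hv1⟩ ⟨c v, hv2⟩
  have : n ≤ ((Q n).induce Sᶜ).dist ⟨v, hv1⟩ ⟨c v, hv2⟩ := by
    rw [← hp]
    calc n = hammingDist v (c v) := hham.symm
    _ ≤ p.length := hmap
  omega
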